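/- Let a = (a_1,…,a_n) be a tuple of integers with each a_i ≥ 2, and for k = 1,…,n set q_k := μ(a_{k+1},…,a_n)·d(a_1,…,a_{k−1}) (with μ of the empty tuple equal to 1 and d of the empty tuple equal to 1). Then for every λ ∈ ℂ and every (z_1,…,z_n) ∈ ℂ^n one has p_a(λ^{q_1} z_1, λ^{q_2} z_2, …, λ^{q_n} z_n) = λ^{d(a)} · p_a(z_1,…,z_n); that is, p_a is weighted homogeneous of degree d(a) with integer weights q_1,…,q_n. -/

import Mathlib

open scoped BigOperators

/-- The signed chain polynomial
`p_a(z_1,…,z_n) = −z_1^{a_1}z_2 + z_2^{a_2}z_3 − ⋯ + (−1)^n z_n^{a_n}` (0-based). -/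
noncomputable def chainP (n : ℕ) (a : ℕ → ℕ) (z : ℕ → ℂ) : ℂ :=
  (∑ k ∈ Finset.range (n - 1), (-1 : ℂ) ^ (k + 1) * z k ^ a k * z (k + 1))
    + (-1 : ℂ) ^ n * z (n - 1) ^ a (n - 1)

/-- The Milnor number `μ(a) = Σ_{k=0}^{n} (−1)^k a_{k+1}⋯a_n` (0-based). -/
def muZ (n : ℕ) (a : ℕ → ℕ) : ℤ :=
  ∑ k ∈ Finset.range (n + 1), (-1 : ℤ) ^ k * ∏ i ∈ Finset.Ico k n, (a i : ℤ)

/-- `d(a) = a_1 ⋯ a_n` (0-based). -/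
def dd (n : ℕ) (a : ℕ → ℕ) : ℕ := ∏ i ∈ Finset.range n, a i

/-- The weight `q_k = μ(a_{k+1},…,a_n) · d(a_1,…,a_{k−1})` (0-based `k`). -/
def qWeight (n : ℕ) (a : ℕ → ℕ) (k : ℕ) : ℤ :=
  muZ (n - (k + 1)) (fun i => a (k + 1 + i)) * (dd k a : ℤ)

lemma muZ_zero (a : ℕ → ℕ) : muZ 0 a = 1 := by simp [muZ]

/-- Tail recurrence for `μ`. -/
lemma muZ_succ_tail (n : ℕ) (a : ℕ → ℕ) :
    muZ (n + 1) a
      = (∏ i ∈ Finset.range (n + 1), (a i : ℤ)) - muZ n (fun i => a (i + 1)) := by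
  unfold muZ
  rw [Finset.sum_range_succ']
  have h1 : ∀ k ∈ Finset.range (n + 1),
      (-1 : ℤ) ^ (k + 1) * ∏ i ∈ Finset.Ico (k + 1) (n + 1), (a i : ℤ)
        = -((-1 : ℤ) ^ k * ∏ i ∈ Finset.Ico k n, ((a (i + 1) : ℤ))) := by
    intro k hk
    have : (∏ i ∈ Finset.Ico k n, ((a (i + 1) : ℤ)))
        = ∏ i ∈ Finset.Ico (k + 1) (n + 1), (a i : ℤ) :=
      Finset.prod_Ico_add' (fun i => (a i : ℤ)) k n 1
    rw [← this, pow_succ]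
    ring
  rw [Finset.sum_congr rfl h1, Finset.sum_neg_distrib, pow_zero, one_mul,
    ← Finset.range_eq_Ico]
  ring

/-- Top recurrence for `μ`. -/
lemma muZ_succ_top (n : ℕ) (a : ℕ → ℕ) :
    muZ (n + 1) a = (a n : ℤ) * muZ n a + (-1 : ℤ) ^ (n + 1) := by
  unfold muZ
  rw [Finset.sum_range_succ]
  simp only [Finset.Ico_self, Finset.prod_empty, mul_one]
  congr 1
  rw [Finset.mul_sum]
  refine Finset.sum_congr rfl fun k hk => ?_
  rw [Finset.mem_range] at hk
  rw [Finset.prod_Ico_succ_top (Nat.lt_succ_iff.mp hk)]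
  ring

lemma one_le_muZ : ∀ (n : ℕ) (a : ℕ → ℕ), (∀ i < n, 2 ≤ a i) → 1 ≤ muZ n a := by
  intro n
  induction n with
  | zero => intro a _; simp [muZ]
  | succ m ih =>
    intro a ha
    rw [muZ_succ_top]
    have h1 : 1 ≤ muZ m a := ih a (fun i hi => ha i (by omega))
    have h2 : (2 : ℤ) ≤ (a m : ℤ) := by exact_mod_cast ha m (by omega)
    have h3 : (2 : ℤ) ≤ (a m : ℤ) * muZ m a := by nlinarith
    rcases Nat.even_or_odd (m + 1) with h | h
    · rw [h.neg_one_pow]; linarith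
    · rw [h.neg_one_pow]; linarith

lemma one_le_dd (n : ℕ) (a : ℕ → ℕ) (ha : ∀ i < n, 2 ≤ a i) : 1 ≤ dd n a := by
  refine Finset.one_le_prod' fun i hi => ?_
  rw [Finset.mem_range] at hi
  have := ha i hi
  omega

lemma one_le_qWeight (n : ℕ) (a : ℕ → ℕ) (ha : ∀ i < n, 2 ≤ a i) (k : ℕ) (hk : k < n) :
    1 ≤ qWeight n a k := by
  unfold qWeight
  have h1 : 1 ≤ muZ (n - (k + 1)) (fun i => a (k + 1 + i)) :=
    one_le_muZ _ _ (fun i hi => ha (k + 1 + i) (by omega))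
  have h2 : (1 : ℤ) ≤ (dd k a : ℤ) := by
    exact_mod_cast one_le_dd k a (fun i hi => ha i (by omega))
  nlinarith

/-- The key identity: `a_k q_k + q_{k+1} = d`. -/
lemma qWeight_key (n k : ℕ) (hk : k + 1 < n) (a : ℕ → ℕ) :
    (a k : ℤ) * qWeight n a k + qWeight n a (k + 1) = (dd n a : ℤ) := by
  obtain ⟨m, hm⟩ : ∃ m, n - (k + 1) = m + 1 := ⟨n - (k + 2), by omega⟩
  have hm2 : n - (k + 2) = m := by omega
  unfold qWeight
  rw [hm, hm2, muZ_succ_tail]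
  have hshift : (muZ m fun i => a (k + 1 + (i + 1))) = muZ m fun i => a (k + 1 + 1 + i) := by
    congr 1; funext i; congr 1; omega
  rw [hshift]
  have hdd1 : (dd (k + 1) a : ℤ) = (dd k a : ℤ) * (a k : ℤ) := by
    unfold dd; push_cast [Finset.prod_range_succ]; ring
  have hdd2 : (dd n a : ℤ)
      = (dd (k + 1) a : ℤ) * ∏ i ∈ Finset.range (m + 1), (a (k + 1 + i) : ℤ) := by
    have hn : n = (k + 1) + (m + 1) := by omega
    unfold dd
    rw [hn]
    push_cast [Finset.prod_range_add]
    ring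
  rw [hdd2, hdd1]
  ring

/-- The last-variable identity: `a_{n-1} q_{n-1} = d`. -/
lemma qWeight_last (n : ℕ) (hn : 1 ≤ n) (a : ℕ → ℕ) :
    (a (n - 1) : ℤ) * qWeight n a (n - 1) = (dd n a : ℤ) := by
  unfold qWeight
  have h1 : n - (n - 1 + 1) = 0 := by omega
  rw [h1, muZ_zero, one_mul]
  have h2 : n = (n - 1) + 1 := by omega
  have : (dd n a : ℤ) = (dd (n - 1) a : ℤ) * (a (n - 1) : ℤ) := by
    unfold dd
    rw [h2]
    push_cast [Finset.prod_range_succ]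
    ring
  rw [this]
  ring

/-- `p_a` is weighted homogeneous of degree `d(a)` with integer
weights `q_1, …, q_n`. -/
theorem stmt_7 (n : ℕ) (hn : 1 ≤ n) (a : ℕ → ℕ) (ha : ∀ i < n, 2 ≤ a i) :
    ∀ lam : ℂ, ∀ z : ℕ → ℂ,
      chainP n a (fun k => lam ^ (qWeight n a k) * z k)
        = lam ^ ((dd n a : ℤ)) * chainP n a z := by
  intro lam z
  rcases eq_or_ne lam 0 with rfl | hl
  · have hq0 : ∀ k < n, (0 : ℂ) ^ qWeight n a k = 0 := fun k hk =>
      zero_zpow _ (by have := one_le_qWeight n a ha k hk; omega)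
    have hd0 : (0 : ℂ) ^ ((dd n a : ℤ)) = 0 := by
      refine zero_zpow _ ?_
      have := one_le_dd n a ha
      simp only [ne_eq, Nat.cast_eq_zero]
      omega
    unfold chainP
    beta_reduce
    rw [hd0, zero_mul]
    have hterms : ∀ k ∈ Finset.range (n - 1),
        (-1 : ℂ) ^ (k + 1) * ((0 : ℂ) ^ qWeight n a k * z k) ^ a k
          * ((0 : ℂ) ^ qWeight n a (k + 1) * z (k + 1)) = 0 := by
      intro k hk
      rw [Finset.mem_range] at hk
      rw [hq0 (k + 1) (by omega)]
      ring
    rw [Finset.sum_congr rfl hterms, Finset.sum_const_zero, zero_add]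
    rw [hq0 (n - 1) (by omega), zero_mul]
    rw [zero_pow (by have := ha (n - 1) (by omega); omega)]
    ring
  · unfold chainP
    beta_reduce
    have hterms : ∀ k ∈ Finset.range (n - 1),
        (-1 : ℂ) ^ (k + 1) * (lam ^ qWeight n a k * z k) ^ a k
          * (lam ^ qWeight n a (k + 1) * z (k + 1))
        = lam ^ ((dd n a : ℤ)) * ((-1 : ℂ) ^ (k + 1) * z k ^ a k * z (k + 1)) := by
      intro k hk
      rw [Finset.mem_range] at hk
      have e1 : (lam ^ qWeight n a k) ^ a k = lam ^ ((a k : ℤ) * qWeight n a k) := by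
        rw [mul_comm, zpow_mul, zpow_natCast]
      have e2 : lam ^ ((a k : ℤ) * qWeight n a k) * lam ^ qWeight n a (k + 1)
          = lam ^ ((dd n a : ℤ)) := by
        rw [← zpow_add₀ hl, qWeight_key n k (by omega) a]
      rw [mul_pow, e1]
      calc (-1 : ℂ) ^ (k + 1) * (lam ^ ((a k : ℤ) * qWeight n a k) * z k ^ a k)
            * (lam ^ qWeight n a (k + 1) * z (k + 1))
          = (lam ^ ((a k : ℤ) * qWeight n a k) * lam ^ qWeight n a (k + 1))
            * ((-1 : ℂ) ^ (k + 1) * z k ^ a k * z (k + 1)) := by ring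
        _ = _ := by rw [e2]
    rw [Finset.sum_congr rfl hterms, ← Finset.mul_sum]
    have hlast : (-1 : ℂ) ^ n * (lam ^ qWeight n a (n - 1) * z (n - 1)) ^ a (n - 1)
        = lam ^ ((dd n a : ℤ)) * ((-1 : ℂ) ^ n * z (n - 1) ^ a (n - 1)) := by
      have e1 : (lam ^ qWeight n a (n - 1)) ^ a (n - 1)
          = lam ^ ((a (n - 1) : ℤ) * qWeight n a (n - 1)) := by
        rw [mul_comm, zpow_mul, zpow_natCast]
      rw [mul_pow, e1, qWeight_last n hn a]
      ring
    rw [hlast]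
    ring
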